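/- Let K be a field, A = K[x_1,…,x_n] with n > 1, and let d ≥ 1 be an integer. For any subspaces B and C of A_1, ⟨B^d⟩ ∩ ⟨C^d⟩ = ⟨(B ∩ C)^d⟩ in A_d. -/

import Mathlib

open MvPolynomial

private lemma degree_one_single {σ : Type*} {m : σ →₀ ℕ} (h : m.degree = 1) :
    ∃ i, m = Finsupp.single i 1 := by
  classical
  have hsum : ∑ i ∈ m.support, m i = 1 := h
  have hne : m.support.Nonempty := by
    rcases Finset.eq_empty_or_nonempty m.support with he | hne
    · rw [he] at hsum; simp at hsum
    · exact hne
  obtain ⟨i, hi⟩ := hne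
  have hadd := Finset.add_sum_erase m.support m hi
  rw [hsum] at hadd
  have hige : 1 ≤ m i := Nat.one_le_iff_ne_zero.mpr (Finsupp.mem_support_iff.mp hi)
  have hmi : m i = 1 ∧ ∑ j ∈ m.support.erase i, m j = 0 := by omega
  refine ⟨i, Finsupp.ext fun j => ?_⟩
  rcases eq_or_ne j i with rfl | hji
  · simp [hmi.1]
  · rw [Finsupp.single_apply, if_neg (Ne.symm hji)]
    by_contra hj
    have hjsup : j ∈ m.support := Finsupp.mem_support_iff.mpr hj
    have hjer : j ∈ m.support.erase i := Finset.mem_erase.mpr ⟨hji, hjsup⟩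
    have := Finset.sum_eq_zero_iff.mp hmi.2 j hjer
    exact hj this

private lemma hom1_le_span {K : Type*} [Field K] {n : ℕ} :
    homogeneousSubmodule (Fin n) K 1 ≤
      Submodule.span K (Set.range (X : Fin n → MvPolynomial (Fin n) K)) := by
  intro p hp
  rw [mem_homogeneousSubmodule] at hp
  rw [p.as_sum]
  refine Submodule.sum_mem _ fun m hm => ?_
  have hdeg : m.degree = 1 := by
    rw [Finsupp.degree_eq_weight_one]
    exact hp (mem_support_iff.mp hm)
  obtain ⟨i, rfl⟩ := degree_one_single hdeg
  have : (monomial (Finsupp.single i 1)) (coeff (Finsupp.single i 1) p)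
      = coeff (Finsupp.single i 1) p • X i := by
    rw [smul_eq_C_mul, X, C_mul_monomial, mul_one]
  rw [this]
  exact Submodule.smul_mem _ _ (Submodule.subset_span ⟨i, rfl⟩)

/-- For any subspaces `B` and `C` of `A_1` and `d ≥ 1`,
`⟨B^d⟩ ∩ ⟨C^d⟩ = ⟨(B ∩ C)^d⟩`, where `T ^ d` denotes the span of all
products of `d` elements of `T`. -/
theorem power_subspace_inter (K : Type*) [Field K] (n d : ℕ)
    (hn : 1 < n) (hd : 1 ≤ d)
    (B C : Submodule K (MvPolynomial (Fin n) K))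
    (hB : B ≤ homogeneousSubmodule (Fin n) K 1)
    (hC : C ≤ homogeneousSubmodule (Fin n) K 1) :
    (B ^ d) ⊓ (C ^ d) = (B ⊓ C) ^ d := by
  classical
  set A := MvPolynomial (Fin n) K
  set W : Submodule K A := B ⊓ C with hWdef
  -- choose a complement C' of W inside C
  obtain ⟨C₀, hC₀⟩ := Submodule.exists_isCompl (W.comap C.subtype)
  set C' : Submodule K A := C₀.map C.subtype with hC'def
  have hC'le : C' ≤ C := by
    rintro x ⟨z, _, rfl⟩; exact z.2
  have hdecomp : ∀ c ∈ C, ∃ w ∈ W, ∃ c' ∈ C', c = w + c' := by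
    intro c hc
    have : (⟨c, hc⟩ : C) ∈ (W.comap C.subtype) ⊔ C₀ := by
      rw [hC₀.sup_eq_top]; trivial
    obtain ⟨y, hy, z, hz, hyz⟩ := Submodule.mem_sup.mp this
    refine ⟨y, hy, z, ⟨z, hz, rfl⟩, ?_⟩
    have := congrArg (C.subtype) hyz
    simpa using this.symm
  have hBC' : B ⊓ C' = ⊥ := by
    rw [Submodule.eq_bot_iff]
    rintro x ⟨hxB, z, hz, rfl⟩
    have hzw : z ∈ (W.comap C.subtype) := by
      simp only [Submodule.mem_comap, Submodule.coe_subtype]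
      exact ⟨hxB, z.2⟩
    have hz0 : z = 0 := (Submodule.mem_bot _).mp
      (by rw [← hC₀.inf_eq_bot]; exact ⟨hzw, hz⟩)
    simp [hz0]
  -- extend C' to a complement D of B
  obtain ⟨U, hU⟩ := Submodule.exists_isCompl (B ⊔ C')
  set D : Submodule K A := C' ⊔ U with hDdef
  have hBD : IsCompl B D := by
    constructor
    · rw [disjoint_iff, Submodule.eq_bot_iff]
      rintro x ⟨hxB, hxD⟩
      obtain ⟨c', hc', u, hu, rfl⟩ := Submodule.mem_sup.mp hxD
      have huBC : u ∈ (B ⊔ C') := by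
        have : u = (c' + u) - c' := by ring
        rw [this]
        exact Submodule.sub_mem _ (Submodule.mem_sup_left hxB)
          (Submodule.mem_sup_right hc')
      have hu0 : u = 0 := by
        have : u ∈ (B ⊔ C') ⊓ U := ⟨huBC, hu⟩
        rwa [hU.inf_eq_bot, Submodule.mem_bot] at this
      subst hu0
      rw [add_zero] at hxB ⊢
      have : c' ∈ B ⊓ C' := ⟨hxB, hc'⟩
      rwa [hBC', Submodule.mem_bot] at this
    · rw [codisjoint_iff, hDdef, ← sup_assoc, hU.sup_eq_top]
  -- the projection onto B along D
  set q : A →ₗ[K] A := B.subtype.comp (B.projectionOnto D hBD) with hqdef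
  have hqB : ∀ b ∈ B, q b = b := by
    intro b hb
    have := Submodule.linearProjOfIsCompl_apply_left hBD ⟨b, hb⟩
    exact congrArg (B.subtype) this
  have hqD : ∀ x ∈ D, q x = 0 := by
    intro x hx
    have := Submodule.projectionOnto_apply_of_mem_right hBD hx
    simp [hqdef, this]
  have hqC : ∀ c ∈ C, q c ∈ W := by
    intro c hc
    obtain ⟨w, hw, c', hc', rfl⟩ := hdecomp c hc
    rw [map_add, hqB w hw.1, hqD c' (Submodule.mem_sup_left hc')]
    simpa using hw
  -- the induced algebra endomorphism
  set Φ : A →ₐ[K] A := aeval (fun i => q (X i)) with hΦdef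
  have hΦq : ∀ x ∈ Submodule.span K (Set.range (X : Fin n → A)), Φ x = q x := by
    intro x hx
    refine LinearMap.eqOn_span (f := Φ.toLinearMap) (g := q) ?_ hx
    rintro _ ⟨i, rfl⟩
    show Φ (X i) = q (X i)
    rw [hΦdef]
    exact aeval_X _ i
  have hΦB : ∀ b ∈ B, Φ b = b := fun b hb =>
    (hΦq b (hom1_le_span (hB hb))).trans (hqB b hb)
  have hΦC : ∀ c ∈ C, Φ c ∈ W := fun c hc =>
    (hΦq c (hom1_le_span (hC hc))) ▸ hqC c hc
  -- Φ fixes B^k pointwise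
  set F : Submodule K A := LinearMap.eqLocus Φ.toLinearMap LinearMap.id with hFdef
  have hBF : B ≤ F := fun b hb => hΦB b hb
  have hpowF : ∀ k, B ^ (k + 1) ≤ F := by
    intro k
    induction k with
    | zero => simpa using hBF
    | succ k ih =>
      rw [pow_succ]
      refine Submodule.mul_le.mpr fun m hm x hx => ?_
      have hm' : Φ m = m := ih hm
      have hx' : Φ x = x := hBF hx
      show Φ (m * x) = m * x
      rw [map_mul, hm', hx']
  -- Φ maps C^k into W^k
  have hmapC : ∀ k, Submodule.map Φ.toLinearMap C ^ k ≤ W ^ k := by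
    intro k
    have h1 : Submodule.map Φ.toLinearMap C ≤ W := by
      rintro _ ⟨c, hc, rfl⟩; exact hΦC c hc
    induction k with
    | zero => simp
    | succ k ih =>
      rw [pow_succ, pow_succ]
      exact mul_le_mul' ih h1
  -- power is monotone
  have hpowmono' : ∀ (M N : Submodule K A), M ≤ N → ∀ k, M ^ k ≤ N ^ k := by
    intro M N h k
    induction k with
    | zero => simp
    | succ k ih =>
      rw [pow_succ, pow_succ]
      exact mul_le_mul' ih h
  have hpowmono : ∀ (M N : Submodule K A), M ≤ N → M ^ d ≤ N ^ d :=
    fun M N h => hpowmono' M N h d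
  refine le_antisymm ?_ (le_inf (hpowmono _ _ inf_le_left) (hpowmono _ _ inf_le_right))
  rintro z ⟨hzB, hzC⟩
  obtain ⟨k, rfl⟩ : ∃ k, d = k + 1 := ⟨d - 1, (Nat.succ_pred_eq_of_pos hd).symm⟩
  have hz1 : Φ z = z := hpowF k hzB
  have hz2 : Φ z ∈ W ^ (k + 1) := by
    refine hmapC (k + 1) ?_
    rw [← Submodule.map_pow]
    exact ⟨z, hzC, rfl⟩
  rwa [hz1] at hz2
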